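/- arXiv:2403.13426 — 2 statements merged into one kernel-verified Lean document; each statement's English description precedes it below -/
import Mathlib

section
/- Let n ≥ 4 be an integer, let h satisfy hypotheses (H), and suppose h(r) ≤ C2 for all 0 ≤ r ≤ R, where C2 > 0. Then for every integer k ≥ 1, the Steklov spectral gap satisfies σ_(k+1)(g_h) − σ_(k)(g_h) ≤ (λ_(k+1) − λ_(k)) C2^{n−3} R / h(0)^{n−1}. -/
open MeasureTheory Set

/-- Hypotheses (H): `h` is smooth on `[0,R]`, positive on `[0,R)`, `h(R)=0`,
`h'(R) = -1`, and all even-order derivatives of `h` vanish at `R`. -/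
def SatisfiesH (R : ℝ) (h : ℝ → ℝ) : Prop :=
  ContDiffOn ℝ (⊤ : ℕ∞) h (Set.Icc 0 R) ∧
  (∀ r ∈ Set.Ico (0:ℝ) R, 0 < h r) ∧
  h R = 0 ∧
  derivWithin h (Set.Icc 0 R) R = -1 ∧
  ∀ k : ℕ, iteratedDerivWithin (2 * k) h (Set.Icc 0 R) R = 0

/-- The `k`-th distinct eigenvalue `λ_(k) = k (n + k - 2)` of the Laplacian on the
round unit sphere `S^{n-1}`. -/
noncomputable def sphereEig (n k : ℕ) : ℝ := (k : ℝ) * ((n : ℝ) + (k : ℝ) - 2)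

/-- The Rayleigh quotient
`R_λ(a; h) = (∫₀^R ((a')² h^{n-1} + λ a² h^{n-3}))/(a(0)² h(0)^{n-1})`. -/
noncomputable def rayleighQ (R : ℝ) (n : ℕ) (lam : ℝ) (h a : ℝ → ℝ) : ℝ :=
  (∫ r in (0:ℝ)..R,
      (deriv a r) ^ 2 * h r ^ ((n : ℤ) - 1) + lam * (a r) ^ 2 * h r ^ ((n : ℤ) - 3)) /
    ((a 0) ^ 2 * h 0 ^ ((n : ℤ) - 1))

/-- Admissible test functions: Lipschitz on `[0,R]`, vanishing at `R`, nonzero at `0`. -/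
def IsAdmissible (R : ℝ) (a : ℝ → ℝ) : Prop :=
  (∃ K : NNReal, LipschitzOnWith K a (Set.Icc 0 R)) ∧ a R = 0 ∧ a 0 ≠ 0

/-- The `k`-th distinct Steklov eigenvalue of the ball `[0,R] × S^{n-1}` with the
revolution metric `g_h`, characterized variationally. -/
noncomputable def steklov (R : ℝ) (n k : ℕ) (h : ℝ → ℝ) : ℝ :=
  sInf { v : ℝ | ∃ a : ℝ → ℝ, IsAdmissible R a ∧ v = rayleighQ R n (sphereEig n k) h a }

/-- `a` is a minimizer realizing `σ_(k)(g_h)`. -/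
def IsMinimizer (R : ℝ) (n k : ℕ) (h a : ℝ → ℝ) : Prop :=
  IsAdmissible R a ∧ rayleighQ R n (sphereEig n k) h a = steklov R n k h

open Filter Topology

section Aux

noncomputable def clampAux (c x : ℝ) : ℝ := max (-c) (min x c)

lemma clampAux_lip (c : ℝ) : ∀ x y : ℝ, |clampAux c x - clampAux c y| ≤ |x - y| := by
  intro x y
  unfold clampAux
  calc |max (-c) (min x c) - max (-c) (min y c)|
      = |max (min x c) (-c) - max (min y c) (-c)| := by rw [max_comm (-c), max_comm (-c)]
    _ ≤ |min x c - min y c| := abs_max_sub_max_le_abs _ _ _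
    _ ≤ max |x - y| |c - c| := abs_min_sub_min_le_max _ _ _ _
    _ = |x - y| := by simp

lemma clampAux_lipschitzWith (c : ℝ) : LipschitzWith 1 (clampAux c) :=
  LipschitzWith.of_dist_le_mul (fun x y => by
    rw [Real.dist_eq, Real.dist_eq]; simpa using clampAux_lip c x y)

lemma clampAux_abs_le (c x : ℝ) (hc : 0 ≤ c) : |clampAux c x| ≤ |x| := by
  unfold clampAux
  rw [abs_le]
  constructor
  · rcases le_total x c with hxc | hxc
    · rw [min_eq_left hxc]
      exact le_max_of_le_right (neg_abs_le x)
    · rw [min_eq_right hxc]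
      exact le_max_of_le_right (by linarith [abs_nonneg x, neg_abs_le x])
  · refine max_le (by linarith [abs_nonneg x]) ((min_le_left _ _).trans (le_abs_self x))

lemma clampAux_le (c x : ℝ) (hc : 0 ≤ c) : |clampAux c x| ≤ c := by
  unfold clampAux
  rw [abs_le]
  exact ⟨le_max_left _ _, max_le (by linarith) (min_le_right _ _)⟩

lemma clampAux_of_abs_le {c x : ℝ} (hx : |x| ≤ c) : clampAux c x = x := by
  unfold clampAux
  rw [abs_le] at hx
  rw [min_eq_left hx.2, max_eq_right hx.1]

lemma deriv_eqOn_Ioo {f g : ℝ → ℝ} {R : ℝ} (heq : EqOn f g (Icc 0 R)) {r : ℝ}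
    (hr : r ∈ Ioo (0:ℝ) R) : deriv f r = deriv g r := by
  apply Filter.EventuallyEq.deriv_eq
  filter_upwards [Ioo_mem_nhds hr.1 hr.2] with x hx
  exact heq ⟨hx.1.le, hx.2.le⟩

lemma abs_deriv_le_of_lip {g : ℝ → ℝ} {K : NNReal} (hg : LipschitzWith K g) (r : ℝ) :
    |deriv g r| ≤ K := by
  by_cases hd : DifferentiableAt ℝ g r
  · have h1 : Tendsto (fun x => |slope g r x|) (nhdsWithin r {r}ᶜ) (𝓝 |deriv g r|) :=
      (hasDerivAt_iff_tendsto_slope.1 hd.hasDerivAt).abs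
    refine le_of_tendsto h1 ?_
    filter_upwards with x
    rcases eq_or_ne x r with rfl | hx
    · simp
    · rw [slope_def_field, abs_div]
      rw [div_le_iff₀ (by simpa [sub_eq_zero] using abs_pos.2 (sub_ne_zero.2 hx))]
      simpa [Real.dist_eq] using hg.dist_le_mul x r
  · rw [deriv_zero_of_not_differentiableAt hd]; simpa using K.2

lemma slope_abs_le {f g : ℝ → ℝ} {r : ℝ} (hle : ∀ x, |f x - f r| ≤ |g x - g r|) (x : ℝ) :
    |slope f r x| ≤ |slope g r x| := by
  simp only [slope_def_field, div_eq_mul_inv]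
  rw [abs_mul, abs_mul]
  exact mul_le_mul_of_nonneg_right (by simpa using hle x) (abs_nonneg _)

lemma abs_deriv_le_abs_deriv {f g : ℝ → ℝ} {r : ℝ} (hg : DifferentiableAt ℝ g r)
    (hle : ∀ x, |f x - f r| ≤ |g x - g r|) : |deriv f r| ≤ |deriv g r| := by
  by_cases hf : DifferentiableAt ℝ f r
  · have h1 : Tendsto (fun x => |slope f r x|) (nhdsWithin r {r}ᶜ) (𝓝 |deriv f r|) :=
      (hasDerivAt_iff_tendsto_slope.1 hf.hasDerivAt).abs
    have h2 : Tendsto (fun x => |slope g r x|) (nhdsWithin r {r}ᶜ) (𝓝 |deriv g r|) :=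
      (hasDerivAt_iff_tendsto_slope.1 hg.hasDerivAt).abs
    exact le_of_tendsto_of_tendsto' h1 h2 (fun x => slope_abs_le hle x)
  · rw [deriv_zero_of_not_differentiableAt hf]
    simpa using abs_nonneg _

lemma ae_ne_real (x : ℝ) : ∀ᵐ r : ℝ, r ≠ x := by
  rw [ae_iff]
  have : {r : ℝ | ¬ r ≠ x} = {x} := by ext r; simp
  rw [this]
  exact Real.volume_singleton

lemma integrand_integrable {R C2 : ℝ} (hR : 0 < R) {h : ℝ → ℝ}
    (hcont : ContinuousOn h (Icc 0 R)) (hnn : ∀ r ∈ Icc (0:ℝ) R, 0 ≤ h r)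
    (hub : ∀ r ∈ Icc (0:ℝ) R, h r ≤ C2) {lam : ℝ} (hlam : 0 ≤ lam) (p q : ℕ)
    {f g : ℝ → ℝ} {K : NNReal} (hg : LipschitzWith K g) (heq : EqOn f g (Icc 0 R)) :
    IntervalIntegrable (fun r => (deriv f r)^2 * h r ^ p + lam * (f r)^2 * h r ^ q)
      volume 0 R := by
  have hC2 : 0 ≤ C2 := le_trans (hnn 0 ⟨le_rfl, hR.le⟩) (hub 0 ⟨le_rfl, hR.le⟩)
  rw [intervalIntegrable_iff_integrableOn_Ioc_of_le hR.le]
  have hmeas : AEStronglyMeasurable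
      (fun r => (deriv f r)^2 * h r ^ p + lam * (f r)^2 * h r ^ q)
      (volume.restrict (Ioc (0:ℝ) R)) := by
    have hh : AEMeasurable h (volume.restrict (Ioc (0:ℝ) R)) :=
      (hcont.mono Ioc_subset_Icc_self).aemeasurable measurableSet_Ioc
    have hf : AEMeasurable f (volume.restrict (Ioc (0:ℝ) R)) := by
      have : ContinuousOn f (Icc 0 R) := by
        intro x hx
        exact (hg.continuous.continuousWithinAt).congr (fun y hy => heq hy) (heq hx)
      exact (this.mono Ioc_subset_Icc_self).aemeasurable measurableSet_Ioc
    have hd : AEMeasurable (deriv f) (volume.restrict (Ioc (0:ℝ) R)) :=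
      (measurable_deriv f).aemeasurable
    exact ((((hd.pow_const 2).mul (hh.pow_const p)).add
      (((aemeasurable_const.mul (hf.pow_const 2))).mul (hh.pow_const q)))).aestronglyMeasurable
  set A : ℝ := |f 0| + K * R with hA
  have hA0 : 0 ≤ A := by positivity
  refine Integrable.mono' (g := fun _ => (K:ℝ)^2 * C2 ^ p + lam * A^2 * C2 ^ q)
    (integrableOn_const measure_Ioc_lt_top.ne enorm_ne_top) hmeas ?_
  filter_upwards [ae_restrict_mem measurableSet_Ioc, ae_restrict_of_ae (ae_ne_real R)]
    with r hr hne
  have hrIcc : r ∈ Icc (0:ℝ) R := Ioc_subset_Icc_self hr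
  have hrIoo : r ∈ Ioo (0:ℝ) R := ⟨hr.1, lt_of_le_of_ne hr.2 hne⟩
  have hd : |deriv f r| ≤ (K:ℝ) := by
    rw [deriv_eqOn_Ioo heq hrIoo]; exact abs_deriv_le_of_lip hg r
  have hfr : |f r| ≤ A := by
    have h1 : f r = g r := heq hrIcc
    have h2 : f 0 = g 0 := heq ⟨le_rfl, hR.le⟩
    have hgd := hg.dist_le_mul r 0
    rw [Real.dist_eq, Real.dist_eq] at hgd
    have hKR : |g r - g 0| ≤ K * R := by
      refine hgd.trans ?_
      have hre : |r - 0| = r := by rw [sub_zero, abs_of_nonneg hrIcc.1]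
      rw [hre]
      exact mul_le_mul_of_nonneg_left hrIcc.2 K.2
    calc |f r| = |g r - g 0 + f 0| := by rw [h1, h2]; ring_nf
      _ ≤ |g r - g 0| + |f 0| := abs_add_le _ _
      _ ≤ K * R + |f 0| := by linarith
      _ = A := by rw [hA]; ring
  have hh0 : 0 ≤ h r := hnn r hrIcc
  have hh2 : h r ≤ C2 := hub r hrIcc
  have hp : h r ^ p ≤ C2 ^ p := pow_le_pow_left₀ hh0 hh2 p
  have hq : h r ^ q ≤ C2 ^ q := pow_le_pow_left₀ hh0 hh2 q
  have hpn : (0:ℝ) ≤ h r ^ p := pow_nonneg hh0 p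
  have hqn : (0:ℝ) ≤ h r ^ q := pow_nonneg hh0 q
  have hd2 : (deriv f r)^2 ≤ (K:ℝ)^2 := by
    rw [← sq_abs]; exact pow_le_pow_left₀ (abs_nonneg _) hd 2
  have hf2 : (f r)^2 ≤ A^2 := by
    rw [← sq_abs]; exact pow_le_pow_left₀ (abs_nonneg _) hfr 2
  have hnn1 : (0:ℝ) ≤ (deriv f r)^2 * h r ^ p + lam * (f r)^2 * h r ^ q := by positivity
  rw [Real.norm_eq_abs, abs_of_nonneg hnn1]
  have e1 : (deriv f r)^2 * h r ^ p ≤ (K:ℝ)^2 * C2 ^ p :=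
    mul_le_mul hd2 hp hpn (by positivity)
  have e2 : lam * (f r)^2 * h r ^ q ≤ lam * A^2 * C2 ^ q := by
    rw [mul_assoc, mul_assoc]
    exact mul_le_mul_of_nonneg_left (mul_le_mul hf2 hq hqn (by positivity)) hlam
  linarith

lemma rayleighQ_nonneg {R : ℝ} (hR : 0 < R) {n : ℕ} {h : ℝ → ℝ}
    (hnn : ∀ r ∈ Icc (0:ℝ) R, 0 ≤ h r) {lam : ℝ} (hlam : 0 ≤ lam) (a : ℝ → ℝ) :
    0 ≤ rayleighQ R n lam h a := by
  unfold rayleighQ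
  apply div_nonneg
  · apply intervalIntegral.integral_nonneg hR.le
    intro u hu
    have h0 := hnn u hu
    exact add_nonneg (mul_nonneg (sq_nonneg _) (zpow_nonneg h0 _))
      (mul_nonneg (mul_nonneg hlam (sq_nonneg _)) (zpow_nonneg h0 _))
  · exact mul_nonneg (sq_nonneg _) (zpow_nonneg (hnn 0 ⟨le_rfl, hR.le⟩) _)

lemma key_lemma {n : ℕ} (hn : 4 ≤ n) {R : ℝ} (hR : 0 < R) {h : ℝ → ℝ} (hH : SatisfiesH R h)
    {C2 : ℝ} (hC2 : 0 < C2) (hub : ∀ r ∈ Icc (0:ℝ) R, h r ≤ C2)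
    {lam lam' : ℝ} (hlam : 0 ≤ lam) (hll : lam ≤ lam')
    {a : ℝ → ℝ} (ha : IsAdmissible R a) :
    ∃ b : ℝ → ℝ, IsAdmissible R b ∧ rayleighQ R n lam' h b ≤
      rayleighQ R n lam h a + (lam' - lam) * C2 ^ (n - 3) * R / h 0 ^ (n - 1) := by
  obtain ⟨⟨K, hK⟩, haR, ha0⟩ := ha
  have hcont : ContinuousOn h (Icc 0 R) := hH.1.continuousOn
  have hnn : ∀ r ∈ Icc (0:ℝ) R, 0 ≤ h r := by
    intro r hr
    rcases eq_or_lt_of_le hr.2 with he | hl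
    · rw [he, hH.2.2.1]
    · exact (hH.2.1 r ⟨hr.1, hl⟩).le
  have h0pos : 0 < h 0 := hH.2.1 0 ⟨le_rfl, hR⟩
  set c : ℝ := |a 0| with hcdef
  have hc : 0 < c := abs_pos.2 ha0
  obtain ⟨g, hgl, hgeq⟩ := hK.extend_real
  set b : ℝ → ℝ := fun x => clampAux c (a x) with hbdef
  set G : ℝ → ℝ := fun x => clampAux c (g x) with hGdef
  have hGl : LipschitzWith K G := by
    have := (clampAux_lipschitzWith c).comp hgl
    rw [one_mul] at this
    exact this
  have hbeq : EqOn b G (Icc 0 R) := fun x hx => by simp only [hbdef, hGdef, hgeq hx]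
  have hb0 : b 0 = a 0 := clampAux_of_abs_le le_rfl
  have hbR : b R = 0 := by
    rw [hbdef]; simp only [haR]
    exact clampAux_of_abs_le (by simpa using hc.le)
  have hbadm : IsAdmissible R b := by
    refine ⟨⟨K, fun x hx y hy => ?_⟩, hbR, by rw [hb0]; exact ha0⟩
    rw [show b x = G x from hbeq hx, show b y = G y from hbeq hy]
    exact hGl.lipschitzOnWith hx hy
  set p : ℕ := n - 1 with hpdef
  set q : ℕ := n - 3 with hqdef
  have ep : ((n:ℤ) - 1) = (p : ℤ) := by rw [hpdef]; omega
  have eq3 : ((n:ℤ) - 3) = (q : ℤ) := by rw [hqdef]; omega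
  have hrw : ∀ (lam0 : ℝ) (f : ℝ → ℝ), rayleighQ R n lam0 h f =
      (∫ r in (0:ℝ)..R, (deriv f r)^2 * h r ^ p + lam0 * (f r)^2 * h r ^ q) /
        ((f 0)^2 * h 0 ^ p) := by
    intro lam0 f
    simp only [rayleighQ, ep, eq3, zpow_natCast]
  have hlam' : 0 ≤ lam' := hlam.trans hll
  have hIa := integrand_integrable hR hcont hnn hub hlam p q hgl hgeq
  have hIb := integrand_integrable hR hcont hnn hub hlam' p q hGl hbeq
  set Cc : ℝ := (lam' - lam) * c^2 * C2 ^ q with hCc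
  have hIac : IntervalIntegrable
      (fun r => ((deriv a r)^2 * h r ^ p + lam * (a r)^2 * h r ^ q) + Cc) volume 0 R :=
    hIa.add intervalIntegrable_const
  have hkey : (∫ r in (0:ℝ)..R, (deriv b r)^2 * h r ^ p + lam' * (b r)^2 * h r ^ q) ≤
      ∫ r in (0:ℝ)..R, ((deriv a r)^2 * h r ^ p + lam * (a r)^2 * h r ^ q) + Cc := by
    refine intervalIntegral.integral_mono_ae_restrict hR.le hIb hIac ?_
    filter_upwards [ae_restrict_mem measurableSet_Icc, ae_restrict_of_ae (ae_ne_real 0),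
      ae_restrict_of_ae (ae_ne_real R), ae_restrict_of_ae hgl.ae_differentiableAt]
      with r hrIcc h0ne hRne hgd
    have hrIoo : r ∈ Ioo (0:ℝ) R :=
      ⟨lt_of_le_of_ne hrIcc.1 (Ne.symm h0ne), lt_of_le_of_ne hrIcc.2 hRne⟩
    have hda : deriv a r = deriv g r := deriv_eqOn_Ioo hgeq hrIoo
    have hdb : deriv b r = deriv G r := deriv_eqOn_Ioo hbeq hrIoo
    have hcmp : |deriv G r| ≤ |deriv g r| :=
      abs_deriv_le_abs_deriv hgd (fun x => clampAux_lip c (g x) (g r))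
    have hsq : (deriv b r)^2 ≤ (deriv a r)^2 := by
      rw [hda, hdb, ← sq_abs, ← sq_abs (deriv g r)]
      exact pow_le_pow_left₀ (abs_nonneg _) hcmp 2
    have hb2a : (b r)^2 ≤ (a r)^2 := by
      rw [← sq_abs, ← sq_abs (a r)]
      exact pow_le_pow_left₀ (abs_nonneg _) (clampAux_abs_le c (a r) hc.le) 2
    have hb2c : (b r)^2 ≤ c^2 := by
      rw [← sq_abs]
      exact pow_le_pow_left₀ (abs_nonneg _) (clampAux_le c (a r) hc.le) 2
    have hh0 : 0 ≤ h r := hnn r hrIcc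
    have hq' : h r ^ q ≤ C2 ^ q := pow_le_pow_left₀ hh0 (hub r hrIcc) q
    have hpn : (0:ℝ) ≤ h r ^ p := pow_nonneg hh0 p
    have hqn : (0:ℝ) ≤ h r ^ q := pow_nonneg hh0 q
    have e1 : (deriv b r)^2 * h r ^ p ≤ (deriv a r)^2 * h r ^ p :=
      mul_le_mul_of_nonneg_right hsq hpn
    have e2 : lam * ((b r)^2 * h r ^ q) ≤ lam * ((a r)^2 * h r ^ q) :=
      mul_le_mul_of_nonneg_left (mul_le_mul_of_nonneg_right hb2a hqn) hlam
    have e3 : (lam' - lam) * ((b r)^2 * h r ^ q) ≤ (lam' - lam) * (c^2 * C2 ^ q) := by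
      refine mul_le_mul_of_nonneg_left ?_ (by linarith)
      exact mul_le_mul hb2c hq' hqn (by positivity)
    rw [hCc]
    nlinarith [e1, e2, e3]
  have hsplit : (∫ r in (0:ℝ)..R,
      ((deriv a r)^2 * h r ^ p + lam * (a r)^2 * h r ^ q) + Cc) =
      (∫ r in (0:ℝ)..R, (deriv a r)^2 * h r ^ p + lam * (a r)^2 * h r ^ q) + Cc * R := by
    rw [intervalIntegral.integral_add hIa intervalIntegrable_const,
      intervalIntegral.integral_const]
    simp [mul_comm]
  have hD : 0 < (a 0)^2 * h 0 ^ p := by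
    have h1 : 0 < (a 0)^2 := by rw [← sq_abs]; exact pow_pos hc 2
    exact mul_pos h1 (pow_pos h0pos p)
  refine ⟨b, hbadm, ?_⟩
  rw [hrw lam' b, hrw lam a, hb0]
  have step1 : (∫ r in (0:ℝ)..R, (deriv b r)^2 * h r ^ p + lam' * (b r)^2 * h r ^ q) /
      ((a 0)^2 * h 0 ^ p) ≤
      ((∫ r in (0:ℝ)..R, (deriv a r)^2 * h r ^ p + lam * (a r)^2 * h r ^ q) + Cc * R) /
      ((a 0)^2 * h 0 ^ p) := by
    have h1 := hkey.trans_eq hsplit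
    exact div_le_div_of_nonneg_right h1 hD.le
  refine step1.trans ?_
  rw [add_div]
  have hCeq : Cc * R / ((a 0)^2 * h 0 ^ p) = (lam' - lam) * C2 ^ q * R / h 0 ^ p := by
    rw [hCc, hcdef, sq_abs]
    have hane : (a 0)^2 ≠ 0 := by positivity
    have hhne : h 0 ^ p ≠ 0 := by positivity
    field_simp
  rw [hCeq]

end Aux

theorem stmt_8 (n : ℕ) (hn : 4 ≤ n) (R : ℝ) (hR : 0 < R) (h : ℝ → ℝ)
    (hH : SatisfiesH R h) (C2 : ℝ) (hC2 : 0 < C2)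
    (hub : ∀ r ∈ Set.Icc (0:ℝ) R, h r ≤ C2) :
    ∀ k : ℕ, 1 ≤ k →
      steklov R n (k + 1) h - steklov R n k h ≤
        (sphereEig n (k + 1) - sphereEig n k) * C2 ^ (n - 3) * R / (h 0) ^ (n - 1) := by
  intro k hk
  have hnn : ∀ r ∈ Icc (0:ℝ) R, 0 ≤ h r := by
    intro r hr
    rcases eq_or_lt_of_le hr.2 with he | hl
    · rw [he, hH.2.2.1]
    · exact (hH.2.1 r ⟨hr.1, hl⟩).le
  have hn4 : (4:ℝ) ≤ (n:ℝ) := by exact_mod_cast hn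
  have hk0 : (0:ℝ) ≤ (k:ℝ) := Nat.cast_nonneg k
  have hlam : 0 ≤ sphereEig n k := by
    unfold sphereEig; nlinarith
  have hll : sphereEig n k ≤ sphereEig n (k+1) := by
    unfold sphereEig; push_cast; nlinarith
  have hlam' : 0 ≤ sphereEig n (k+1) := hlam.trans hll
  set Δ : ℝ := (sphereEig n (k + 1) - sphereEig n k) * C2 ^ (n - 3) * R / (h 0) ^ (n - 1)
    with hΔ
  set S1 := { v : ℝ | ∃ a : ℝ → ℝ, IsAdmissible R a ∧ v = rayleighQ R n (sphereEig n k) h a }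
    with hS1
  set S2 := { v : ℝ | ∃ a : ℝ → ℝ,
      IsAdmissible R a ∧ v = rayleighQ R n (sphereEig n (k+1)) h a } with hS2
  have hbdd2 : BddBelow S2 := by
    refine ⟨0, ?_⟩
    rintro v ⟨a, ha, rfl⟩
    exact rayleighQ_nonneg hR hnn hlam' a
  have hne1 : S1.Nonempty := by
    refine ⟨rayleighQ R n (sphereEig n k) h (fun r => R - r), fun r => R - r, ⟨⟨1, ?_⟩, ?_, ?_⟩, rfl⟩
    · intro x _ y _
      simp only [edist_dist, Real.dist_eq]
      rw [show R - x - (R - y) = -(x - y) by ring, abs_neg]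
      simp [edist_dist, Real.dist_eq]
    · simp
    · simpa using hR.ne'
  have hstep : ∀ v ∈ S1, steklov R n (k + 1) h ≤ v + Δ := by
    rintro v ⟨a, ha, rfl⟩
    obtain ⟨b, hb, hle⟩ := key_lemma hn hR hH hC2 hub hlam hll ha
    have hmem : rayleighQ R n (sphereEig n (k+1)) h b ∈ S2 := ⟨b, hb, rfl⟩
    exact le_trans (csInf_le hbdd2 hmem) hle
  have hfin : steklov R n (k + 1) h - Δ ≤ steklov R n k h := by
    apply le_csInf hne1
    intro v hv
    linarith [hstep v hv]
  linarith
end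

section
/- Let n ≥ 3 be an integer, let h satisfy hypotheses (H), let k ≥ 1 be an integer, and suppose there exist C2 > C1 > 0 and 0 < R1 < R such that h(r) ≤ C2 for all 0 ≤ r ≤ R and h(r) ≥ C1 for all 0 ≤ r ≤ R1. Then σ_(k)(g_h) ≤ (C2^{n−3}/C1^{n−1}) · (R λ_(k) + C2²/(R − R1)). -/
open MeasureTheory Set

lemma abs_deriv_le_of_lipschitz {f : ℝ → ℝ} {C : NNReal} (hf : LipschitzWith C f) (x : ℝ) :
    |deriv f x| ≤ C := by
  have h1 := norm_fderiv_le_of_lipschitz ℝ hf (x₀ := x)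
  calc |deriv f x| = ‖fderiv ℝ f x 1‖ := by rw [fderiv_apply_one_eq_deriv]; rfl
    _ ≤ ‖fderiv ℝ f x‖ * ‖(1:ℝ)‖ := ContinuousLinearMap.le_opNorm _ _
    _ ≤ C := by simpa using h1

theorem stmt_14 (n : ℕ) (hn : 3 ≤ n) (R : ℝ) (hR : 0 < R) (h : ℝ → ℝ)
    (hH : SatisfiesH R h) (k : ℕ) (hk : 1 ≤ k)
    (C1 C2 R1 : ℝ) (hC1 : 0 < C1) (hC12 : C1 < C2) (hR1 : 0 < R1) (hR1R : R1 < R)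
    (hub : ∀ r ∈ Set.Icc (0:ℝ) R, h r ≤ C2)
    (hlb : ∀ r ∈ Set.Icc (0:ℝ) R1, C1 ≤ h r) :
    steklov R n k h ≤
      (C2 ^ (n - 3) / C1 ^ (n - 1)) * (R * sphereEig n k + C2 ^ 2 / (R - R1)) := by
  have hC2 : 0 < C2 := hC1.trans hC12
  have hd : 0 < R - R1 := by linarith
  set lam := sphereEig n k with hlamdef
  have hlam : 0 ≤ lam := by
    have h1 : (1:ℝ) ≤ (k:ℝ) := by exact_mod_cast hk
    have h2 : (3:ℝ) ≤ (n:ℝ) := by exact_mod_cast hn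
    have : (0:ℝ) ≤ (k:ℝ) * ((n:ℝ) + (k:ℝ) - 2) := by nlinarith
    simpa [hlamdef, sphereEig] using this
  -- nonnegativity of h on [0,R]
  have hh0 : ∀ r ∈ Set.Icc (0:ℝ) R, 0 ≤ h r := by
    intro r hr
    rcases eq_or_lt_of_le hr.2 with he | hlt
    · rw [he, hH.2.2.1]
    · exact (hH.2.1 r ⟨hr.1, hlt⟩).le
  have hh0pos : 0 < h 0 := hH.2.1 0 ⟨le_rfl, hR⟩
  -- exponent rewrites
  have e1 : ∀ x : ℝ, x ^ ((n:ℤ) - 1) = x ^ (n - 1) := by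
    intro x; rw [show ((n:ℤ) - 1) = ((n - 1 : ℕ) : ℤ) by omega, zpow_natCast]
  have e3 : ∀ x : ℝ, x ^ ((n:ℤ) - 3) = x ^ (n - 3) := by
    intro x; rw [show ((n:ℤ) - 3) = ((n - 3 : ℕ) : ℤ) by omega, zpow_natCast]
  -- the test function
  set a : ℝ → ℝ := fun r => min 1 ((R - r) / (R - R1)) with hadef
  have hval : ∀ r : ℝ, r ≤ R1 → a r = 1 := by
    intro r hr
    have : (1:ℝ) ≤ (R - r) / (R - R1) := by
      rw [le_div_iff₀ hd]; linarith
    simp [hadef, min_eq_left this]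
  have ha0 : a 0 = 1 := hval 0 hR1.le
  have haR : a R = 0 := by simp [hadef]
  have hale : ∀ r : ℝ, a r ≤ 1 := fun r => min_le_left _ _
  have hage : ∀ r ∈ Set.Icc (0:ℝ) R, 0 ≤ a r := by
    intro r hr
    apply le_min zero_le_one
    apply div_nonneg _ hd.le; linarith [hr.2]
  have hasq : ∀ r ∈ Set.Icc (0:ℝ) R, (a r) ^ 2 ≤ 1 := by
    intro r hr
    calc (a r)^2 ≤ 1^2 := by
          apply sq_le_sq' _ (hale r); linarith [hage r hr]
      _ = 1 := one_pow 2
  -- Lipschitz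
  set K : NNReal := ⟨1/(R-R1), by positivity⟩ with hKdef
  have lipA : LipschitzWith K a := by
    have hg : LipschitzWith K (fun r => (R - r)/(R-R1)) := by
      apply LipschitzWith.of_dist_le_mul
      intro x y
      rw [Real.dist_eq, Real.dist_eq]
      have h2 : (R - x)/(R-R1) - (R - y)/(R-R1) = -((x - y)/(R-R1)) := by field_simp; ring
      rw [h2, abs_neg, abs_div, abs_of_pos hd, div_eq_inv_mul]
      simp [hKdef, one_div]
      exact le_rfl
    exact hg.const_min 1
  have hderiv_bd : ∀ r : ℝ, (deriv a r) ^ 2 ≤ (1/(R-R1))^2 := by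
    intro r
    have := abs_deriv_le_of_lipschitz lipA r
    have hK : (K : ℝ) = 1/(R-R1) := rfl
    rw [hK] at this
    have := sq_le_sq' (by linarith [abs_nonneg (deriv a r), neg_abs_le (deriv a r)]) (le_of_abs_le this)
    simpa using this
  have hderiv0 : ∀ r : ℝ, r < R1 → deriv a r = 0 := by
    intro r hr
    have hev : a =ᶠ[nhds r] (fun _ => (1:ℝ)) := by
      filter_upwards [Iio_mem_nhds hr] with s hs
      exact hval s (le_of_lt hs)
    rw [hev.deriv_eq]; exact deriv_const r 1
  have hAdm : IsAdmissible R a := by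
    refine ⟨⟨K, lipA.lipschitzOnWith⟩, haR, by rw [ha0]; exact one_ne_zero⟩
  -- the integrand
  set f : ℝ → ℝ := fun r => (deriv a r)^2 * h r ^ (n-1) + lam * (a r)^2 * h r ^ (n-3) with hfdef
  have hfnonneg : ∀ r ∈ Set.Icc (0:ℝ) R, 0 ≤ f r := by
    intro r hr
    have := hh0 r hr
    positivity
  set M : ℝ := (1/(R-R1))^2 * C2^(n-1) + lam * C2^(n-3) with hMdef
  have hfle : ∀ r ∈ Set.Icc (0:ℝ) R, f r ≤ M := by
    intro r hr
    have h1 : h r ^ (n-1) ≤ C2^(n-1) := pow_le_pow_left₀ (hh0 r hr) (hub r hr) _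
    have h3 : h r ^ (n-3) ≤ C2^(n-3) := pow_le_pow_left₀ (hh0 r hr) (hub r hr) _
    have hd2 : (0:ℝ) ≤ (deriv a r)^2 := sq_nonneg _
    have := hderiv_bd r
    have hb1 : (deriv a r)^2 * h r ^ (n-1) ≤ (1/(R-R1))^2 * C2^(n-1) := by
      apply mul_le_mul this h1 (pow_nonneg (hh0 r hr) _) (by positivity)
    have hb3 : lam * (a r)^2 * h r ^ (n-3) ≤ lam * C2^(n-3) := by
      calc lam * (a r)^2 * h r ^ (n-3) ≤ lam * 1 * C2^(n-3) := by
            apply mul_le_mul (mul_le_mul le_rfl (hasq r hr) (sq_nonneg _) hlam) h3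
              (pow_nonneg (hh0 r hr) _) (by positivity)
        _ = lam * C2^(n-3) := by ring
    simpa [hfdef, hMdef] using add_le_add hb1 hb3
  -- integrability
  have haCont : Continuous a := by
    apply Continuous.min continuous_const
    exact (continuous_const.sub continuous_id).div_const _
  have hIntOn : IntegrableOn f (Set.Ioc 0 R) volume := by
    refine ⟨?_, ?_⟩
    · have hhm : AEMeasurable h (volume.restrict (Set.Ioc 0 R)) :=
        ((hH.1.continuousOn).mono Set.Ioc_subset_Icc_self).aemeasurable measurableSet_Ioc
      have hda : AEMeasurable (deriv a) (volume.restrict (Set.Ioc 0 R)) :=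
        (measurable_deriv a).aemeasurable
      have ham : AEMeasurable a (volume.restrict (Set.Ioc 0 R)) :=
        haCont.aemeasurable
      have : AEMeasurable f (volume.restrict (Set.Ioc 0 R)) := by
        apply AEMeasurable.add
        · exact (hda.pow_const 2).mul (hhm.pow_const (n-1))
        · exact ((aemeasurable_const.mul (ham.pow_const 2))).mul (hhm.pow_const (n-3))
      exact this.aestronglyMeasurable
    · apply HasFiniteIntegral.restrict_of_bounded (C := M) measure_Ioc_lt_top
      rw [ae_restrict_iff' measurableSet_Ioc]
      filter_upwards with r hr
      have hr' : r ∈ Set.Icc (0:ℝ) R := ⟨hr.1.le, hr.2⟩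
      rw [Real.norm_eq_abs, abs_of_nonneg (hfnonneg r hr')]
      exact hfle r hr'
  have hInt : IntervalIntegrable f volume 0 R :=
    (intervalIntegrable_iff_integrableOn_Ioc_of_le hR.le).2 hIntOn
  have hInt1 : IntervalIntegrable f volume 0 R1 := by
    apply hInt.mono_set
    rw [Set.uIcc_of_le hR1.le, Set.uIcc_of_le hR.le]
    exact Set.Icc_subset_Icc le_rfl hR1R.le
  have hInt2 : IntervalIntegrable f volume R1 R := by
    apply hInt.mono_set
    rw [Set.uIcc_of_le hR1R.le, Set.uIcc_of_le hR.le]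
    exact Set.Icc_subset_Icc hR1.le le_rfl
  -- piece 1
  have hae1 : f =ᵐ[volume.restrict (Set.Ioc 0 R1)] (fun r => lam * (a r)^2 * h r ^ (n-3)) := by
    have hne : ∀ᵐ (r : ℝ), r ≠ R1 := by
      have : volume ({R1} : Set ℝ) = 0 := Real.volume_singleton
      rw [ae_iff]; simpa using this
    filter_upwards [ae_restrict_of_ae hne, ae_restrict_mem measurableSet_Ioc] with r hr1 hr2
    have : r < R1 := lt_of_le_of_ne hr2.2 hr1
    simp [hfdef, hderiv0 r this]
  have hP1 : ∫ r in (0:ℝ)..R1, f r ≤ lam * C2^(n-3) * R1 := by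
    rw [intervalIntegral.integral_of_le hR1.le, integral_congr_ae hae1]
    have hg1int : IntegrableOn (fun r => lam * (a r)^2 * h r ^ (n-3)) (Set.Ioc 0 R1) volume :=
      ((hIntOn.mono_set (Set.Ioc_subset_Ioc le_rfl hR1R.le)).congr hae1)
    calc ∫ r in Set.Ioc (0:ℝ) R1, lam * (a r)^2 * h r ^ (n-3)
        ≤ ∫ _ in Set.Ioc (0:ℝ) R1, lam * C2^(n-3) := by
          apply setIntegral_mono_on hg1int (integrableOn_const measure_Ioc_lt_top.ne)
            measurableSet_Ioc
          intro r hr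
          have hr' : r ∈ Set.Icc (0:ℝ) R := ⟨hr.1.le, hr.2.trans hR1R.le⟩
          have h3 : h r ^ (n-3) ≤ C2^(n-3) := pow_le_pow_left₀ (hh0 r hr') (hub r hr') _
          calc lam * (a r)^2 * h r ^ (n-3) ≤ lam * 1 * C2^(n-3) :=
                mul_le_mul (mul_le_mul le_rfl (hasq r hr') (sq_nonneg _) hlam) h3
                  (pow_nonneg (hh0 r hr') _) (by positivity)
            _ = lam * C2^(n-3) := by ring
      _ = lam * C2^(n-3) * R1 := by
          rw [setIntegral_const, measureReal_def, Real.volume_Ioc, smul_eq_mul,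
            ENNReal.toReal_ofReal (by linarith : (0:ℝ) ≤ R1 - 0)]
          ring
  -- piece 2
  have hP2 : ∫ r in R1..R, f r ≤ M * (R - R1) := by
    rw [intervalIntegral.integral_of_le hR1R.le]
    calc ∫ r in Set.Ioc R1 R, f r
        ≤ ∫ _ in Set.Ioc R1 R, M := by
          apply setIntegral_mono_on (hIntOn.mono_set (Set.Ioc_subset_Ioc hR1.le le_rfl))
            (integrableOn_const measure_Ioc_lt_top.ne) measurableSet_Ioc
          intro r hr
          exact hfle r ⟨hR1.le.trans hr.1.le, hr.2⟩
      _ = M * (R - R1) := by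
          rw [setIntegral_const, measureReal_def, Real.volume_Ioc, smul_eq_mul,
            ENNReal.toReal_ofReal hd.le]
          ring
  -- total numerator bound
  have hNum : ∫ r in (0:ℝ)..R, f r ≤ lam * C2^(n-3) * R + C2^(n-1)/(R-R1) := by
    rw [← intervalIntegral.integral_add_adjacent_intervals hInt1 hInt2]
    have hM : M * (R - R1) = C2^(n-1)/(R-R1) + lam * C2^(n-3) * (R - R1) := by
      rw [hMdef]; field_simp
    have := add_le_add hP1 hP2
    rw [hM] at this
    linarith
  -- Rayleigh quotient value bound
  have hden_pos : 0 < (a 0)^2 * h 0 ^ ((n:ℤ) - 1) := by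
    rw [ha0, e1]; simpa using pow_pos hh0pos (n-1)
  have hden_ge : C1^(n-1) ≤ (a 0)^2 * h 0 ^ ((n:ℤ) - 1) := by
    rw [ha0, e1, one_pow, one_mul]
    exact pow_le_pow_left₀ hC1.le (hlb 0 ⟨le_rfl, hR1.le⟩) _
  have hRQ : rayleighQ R n lam h a ≤
      (lam * C2^(n-3) * R + C2^(n-1)/(R-R1)) / C1^(n-1) := by
    rw [rayleighQ]
    have hIeq : (∫ r in (0:ℝ)..R,
        (deriv a r) ^ 2 * h r ^ ((n : ℤ) - 1) + lam * (a r) ^ 2 * h r ^ ((n : ℤ) - 3))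
        = ∫ r in (0:ℝ)..R, f r := by
      simp only [e1, e3, hfdef]
    rw [hIeq]
    apply div_le_div₀ (by positivity) hNum (by positivity) hden_ge
  -- conclusion via sInf
  have hBdd : BddBelow {v : ℝ | ∃ a : ℝ → ℝ, IsAdmissible R a ∧ v = rayleighQ R n lam h a} := by
    refine ⟨0, ?_⟩
    rintro v ⟨b, hb, rfl⟩
    rw [rayleighQ]
    apply div_nonneg
    · apply intervalIntegral.integral_nonneg hR.le
      intro u hu
      have := hh0 u hu
      have h1 : (0:ℝ) ≤ h u ^ ((n:ℤ) - 1) := zpow_nonneg this _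
      have h3 : (0:ℝ) ≤ h u ^ ((n:ℤ) - 3) := zpow_nonneg this _
      positivity
    · have : (0:ℝ) ≤ h 0 ^ ((n:ℤ) - 1) := zpow_nonneg hh0pos.le _
      positivity
  have hle : steklov R n k h ≤ rayleighQ R n lam h a := by
    apply csInf_le hBdd
    exact ⟨a, hAdm, rfl⟩
  refine hle.trans (hRQ.trans (le_of_eq ?_))
  have hp : C2^(n-3) * C2^2 = C2^(n-1) := by
    rw [← pow_add]; congr 1; omega
  rw [← hp]
  field_simp
end
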